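/- The sparsemax loss is translation invariant: L(z + c·1; k) = L(z; k) for all c ∈ ℝ. -/

import Mathlib

lemma tau_uniq {K : ℕ} (w : Fin K → ℝ) (s t : ℝ)
    (hs : (∑ j, max 0 (w j - s)) = 1) (ht : (∑ j, max 0 (w j - t)) = 1) : s = t := by
  by_contra hne
  wlog hlt : s < t generalizing s t
  · exact this t s ht hs (Ne.symm hne) (lt_of_le_of_ne (not_lt.mp hlt) (Ne.symm hne))
  have hle : ∀ j ∈ Finset.univ, max 0 (w j - t) ≤ max 0 (w j - s) := by
    intro j _
    exact max_le_max le_rfl (by linarith)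
  have heq : ∀ j ∈ Finset.univ, max 0 (w j - t) = max 0 (w j - s) :=
    (Finset.sum_eq_sum_iff_of_le hle).mp (by rw [hs, ht])
  -- some j has max 0 (w j - t) > 0
  have hex : ∃ j, 0 < max 0 (w j - t) := by
    by_contra h
    push_neg at h
    have : (∑ j, max 0 (w j - t)) = 0 := by
      apply Finset.sum_eq_zero
      intro j _
      exact le_antisymm (h j) (le_max_left _ _)
    rw [ht] at this; norm_num at this
  obtain ⟨j, hj⟩ := hex
  have h1 : w j - t > 0 := by
    by_contra h
    push_neg at h
    rw [max_eq_left h] at hj; exact lt_irrefl _ hj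
  have h2 : max 0 (w j - t) = w j - t := max_eq_right h1.le
  have h3 : max 0 (w j - s) = w j - s := max_eq_right (by linarith)
  have := heq j (Finset.mem_univ j)
  rw [h2, h3] at this
  linarith

theorem stmt17 {K : ℕ} (τ : (Fin K → ℝ) → ℝ)
    (hτ : ∀ w : Fin K → ℝ, (∑ j, max 0 (w j - τ w)) = 1) (k : Fin K)
    (L : (Fin K → ℝ) → ℝ)
    (hL : ∀ z, L z = -z k + (1 / 2) * ∑ j ∈ Finset.univ.filter (fun j => τ z < z j),
        (z j ^ 2 - τ z ^ 2) + 1 / 2)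
    (z : Fin K → ℝ) (c : ℝ) :
    L (fun i => z i + c) = L z := by
  set w : Fin K → ℝ := fun i => z i + c with hw
  have hshift : τ w = τ z + c := by
    refine tau_uniq w (τ w) (τ z + c) (hτ w) ?_
    have := hτ z
    calc (∑ j, max 0 (w j - (τ z + c))) = ∑ j, max 0 (z j - τ z) := by
          apply Finset.sum_congr rfl; intro j _; congr 1; simp only [hw]; ring
      _ = 1 := this
  have hfilt : Finset.univ.filter (fun j => τ w < w j)
      = Finset.univ.filter (fun j => τ z < z j) := by
    apply Finset.filter_congr
    intro j _
    rw [hshift]; simp [hw]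
  -- sum over the support of (z j - τ z) equals 1
  have hsum1 : (∑ j ∈ Finset.univ.filter (fun j => τ z < z j), (z j - τ z)) = 1 := by
    rw [← hτ z]
    rw [Finset.sum_filter]
    apply Finset.sum_congr rfl
    intro j _
    by_cases h : τ z < z j
    · rw [if_pos h, max_eq_right (by linarith)]
    · rw [if_neg h, max_eq_left (by push_neg at h; linarith)]
  rw [hL w, hL z, hfilt]
  have hsq : (∑ j ∈ Finset.univ.filter (fun j => τ z < z j), (w j ^ 2 - τ w ^ 2))
      = (∑ j ∈ Finset.univ.filter (fun j => τ z < z j), (z j ^ 2 - τ z ^ 2)) + 2 * c := by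
    have : ∀ j, w j ^ 2 - τ w ^ 2 = (z j ^ 2 - τ z ^ 2) + 2 * c * (z j - τ z) := by
      intro j; rw [hshift]; simp [hw]; ring
    simp only [this, Finset.sum_add_distrib, ← Finset.mul_sum, hsum1]
    ring
  rw [hsq]
  simp [hw]
  ring
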